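/- Let G be an ℕ-edge-weighted graph with a locally irregular weighting, viewed as a ℂ-weighted complete graph with 0 on non-edges. Then for every pair j < k in {1,...,|V(G)|} and every bijection f : V(G) → {1,...,|V(G)|}, the sum s(G *_f J(j,k)) is not a nonzero purely imaginary number, where J(j,k) is the ℂ-weighted complete graph with weight i on edge {j,k}, weight 1 on other edges incident to j, weight -1 on other edges incident to k, and 0 elsewhere. -/

import Mathlib

def pairs (n : ℕ) : Finset (Fin n × Fin n) := Finset.univ.filter fun p => p.1 < p.2

/-- The `ℂ`-weighted complete graph `J(j,k)`: weight `i` on the edge `{j,k}`, weight `1`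
on other edges incident to `j`, weight `-1` on other edges incident to `k`, `0` elsewhere. -/
def Jw {n : ℕ} (j k : Fin n) : Fin n → Fin n → ℂ := fun a b =>
  if (a = j ∧ b = k) ∨ (a = k ∧ b = j) then Complex.I
  else if (a = j ∨ b = j) ∧ a ≠ b then 1
  else if (a = k ∨ b = k) ∧ a ≠ b then -1
  else 0

def wdeg {n : ℕ} (w : Fin n → Fin n → ℕ) (v : Fin n) : ℕ := ∑ u, w v u

lemma Jw_symm {n : ℕ} (j k x y : Fin n) : Jw j k x y = Jw j k y x := by
  unfold Jw
  by_cases h1 : x = j <;> by_cases h2 : x = k <;> by_cases h3 : y = j <;>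
    by_cases h4 : y = k <;> simp_all [eq_comm]

lemma Jw_diag {n : ℕ} (j k x : Fin n) (h : j ≠ k) : Jw j k x x = 0 := by
  by_cases h1 : x = j <;> by_cases h2 : x = k <;> simp_all [Jw, eq_comm]

lemma innerJ {n : ℕ} {j k : Fin n} (h : j ≠ k) (c : Fin n → Fin n → ℂ) :
    ∑ v, c j v * Jw j k j v = (∑ v, c j v) - c j j - c j k + Complex.I * c j k := by
  have pw : ∀ v, c j v * Jw j k j v
      = c j v + (if v = j then -c j j else 0) + (if v = k then (Complex.I - 1) * c j k else 0) := by
    intro v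
    by_cases h3 : v = j <;> by_cases h4 : v = k <;> simp_all [Jw, eq_comm] <;> ring
  simp only [pw, Finset.sum_add_distrib, Finset.sum_ite_eq', Finset.mem_univ, if_true]
  ring

lemma innerK {n : ℕ} {j k : Fin n} (h : j ≠ k) (c : Fin n → Fin n → ℂ) :
    ∑ v, c k v * Jw j k k v = -(∑ v, c k v) + c k k + c k j + Complex.I * c k j := by
  have pw : ∀ v, c k v * Jw j k k v
      = -(c k v) + (if v = k then c k k else 0) + (if v = j then (Complex.I + 1) * c k j else 0) := by
    intro v
    by_cases h3 : v = j <;> by_cases h4 : v = k <;> simp_all [Jw, eq_comm] <;> ring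
  simp only [pw, Finset.sum_add_distrib, Finset.sum_neg_distrib, Finset.sum_ite_eq',
    Finset.mem_univ, if_true]
  ring

lemma innerO {n : ℕ} {j k : Fin n} (h : j ≠ k) (c : Fin n → Fin n → ℂ) (u : Fin n)
    (hu1 : u ≠ j) (hu2 : u ≠ k) :
    ∑ v, c u v * Jw j k u v = c u j - c u k := by
  have pw : ∀ v, c u v * Jw j k u v
      = (if v = j then c u j else 0) - (if v = k then c u k else 0) := by
    intro v
    by_cases h3 : v = j <;> by_cases h4 : v = k <;> simp_all [Jw, eq_comm]
  simp only [pw, Finset.sum_sub_distrib, Finset.sum_ite_eq', Finset.mem_univ, if_true]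

lemma bigSum {n : ℕ} {j k : Fin n} (h : j ≠ k) (c : Fin n → Fin n → ℂ)
    (hcs : ∀ u v, c u v = c v u) (hjj : c j j = 0) (hkk : c k k = 0) :
    ∑ u, ∑ v, c u v * Jw j k u v
      = 2 * ((∑ v, c j v) - (∑ v, c k v)) + 2 * Complex.I * c j k := by
  have key : ∀ u, (∑ v, c u v * Jw j k u v)
      = (c u j - c u k)
        + (if u = j then ((∑ v, c j v) - c j j - c j k + Complex.I * c j k) - (c j j - c j k) else 0)
        + (if u = k then (-(∑ v, c k v) + c k k + c k j + Complex.I * c k j) - (c k j - c k k) else 0) := by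
    intro u
    by_cases h1 : u = j
    · subst h1
      rw [innerJ h c, if_pos rfl, if_neg h]
      ring
    · by_cases h2 : u = k
      · subst h2
        rw [innerK h c, if_neg h1, if_pos rfl]
        ring
      · rw [innerO h c u h1 h2, if_neg h1, if_neg h2]
        ring
  simp only [key, Finset.sum_add_distrib, Finset.sum_sub_distrib, Finset.sum_ite_eq',
    Finset.mem_univ, if_true]
  have colj : ∑ u, c u j = ∑ v, c j v := Finset.sum_congr rfl fun u _ => hcs u j
  have colk : ∑ u, c u k = ∑ v, c k v := Finset.sum_congr rfl fun u _ => hcs u k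
  rw [colj, colk, hjj, hkk, hcs k j]
  ring

lemma pairs_double {n : ℕ} (F : Fin n × Fin n → ℂ) (hF : ∀ p : Fin n × Fin n, F p.swap = F p)
    (hd : ∀ x, F (x, x) = 0) :
    2 * ∑ p ∈ pairs n, F p = ∑ p : Fin n × Fin n, F p := by
  have h1 : ∑ p : Fin n × Fin n, F p
      = ∑ p ∈ pairs n, F p + ∑ p ∈ Finset.univ.filter (fun p : Fin n × Fin n => ¬ p.1 < p.2), F p :=
    (Finset.sum_filter_add_sum_filter_not _ _ _).symm
  have h2 : ∑ p ∈ Finset.univ.filter (fun p : Fin n × Fin n => ¬ p.1 < p.2), F p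
      = ∑ p ∈ (Finset.univ.filter (fun p : Fin n × Fin n => ¬ p.1 < p.2)).filter
          (fun p => p.2 < p.1), F p
        + ∑ p ∈ (Finset.univ.filter (fun p : Fin n × Fin n => ¬ p.1 < p.2)).filter
          (fun p => ¬ p.2 < p.1), F p :=
    (Finset.sum_filter_add_sum_filter_not _ _ _).symm
  have h3 : ∑ p ∈ (Finset.univ.filter (fun p : Fin n × Fin n => ¬ p.1 < p.2)).filter
      (fun p => ¬ p.2 < p.1), F p = 0 := by
    apply Finset.sum_eq_zero
    intro p hp
    simp only [Finset.mem_filter, Finset.mem_univ, true_and] at hp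
    have : p.1 = p.2 := le_antisymm (not_lt.mp hp.2) (not_lt.mp hp.1)
    have hp' : p = (p.1, p.1) := by rw [Prod.ext_iff]; exact ⟨rfl, this.symm⟩
    rw [hp']; exact hd p.1
  have h4 : ∑ p ∈ (Finset.univ.filter (fun p : Fin n × Fin n => ¬ p.1 < p.2)).filter
      (fun p => p.2 < p.1), F p = ∑ p ∈ pairs n, F p := by
    apply Finset.sum_nbij' (i := fun p : Fin n × Fin n => p.swap)
      (j := fun p : Fin n × Fin n => p.swap)
    · intro p hp
      simp only [Finset.mem_filter, Finset.mem_univ, true_and] at hp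
      simp [pairs, hp.2]
    · intro p hp
      simp only [pairs, Finset.mem_filter, Finset.mem_univ, true_and] at hp
      simp [hp, le_of_lt hp]
    · intro p _; simp
    · intro p _; simp
    · intro p _; exact (hF p).symm
  rw [h1, h2, h3, h4]; ring

/-- If the weighting of `G` is locally irregular then for all `j < k` and every bijection
`f`, the sum `s(G *_f J(j,k))` is not a nonzero purely imaginary number. -/
theorem locallyIrregular_spec_J_all {n : ℕ} (hn : 2 ≤ n)
    (G : SimpleGraph (Fin n)) [DecidableRel G.Adj]
    (w : Fin n → Fin n → ℕ) (hsymm : ∀ a b, w a b = w b a)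
    (hzero : ∀ a b, ¬ G.Adj a b → w a b = 0)
    (hli : ∀ a b : Fin n, G.Adj a b → wdeg w a ≠ wdeg w b) :
    ∀ j k : Fin n, j < k → ∀ f : Fin n ≃ Fin n,
      (∑ p ∈ pairs n, (w p.1 p.2 : ℂ) * Jw j k (f p.1) (f p.2)).re = 0 →
      (∑ p ∈ pairs n, (w p.1 p.2 : ℂ) * Jw j k (f p.1) (f p.2)) = 0 := by
  intro j k hjk f hre
  have hne : j ≠ k := ne_of_lt hjk
  set a : Fin n := f.symm j with ha
  set b : Fin n := f.symm k with hb
  set c : Fin n → Fin n → ℂ := fun u v => (w (f.symm u) (f.symm v) : ℂ) with hc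
  have hcs : ∀ u v, c u v = c v u := by
    intro u v; simp only [hc]; exact_mod_cast hsymm (f.symm u) (f.symm v)
  have hjj : c j j = 0 := by
    simp only [hc]
    exact_mod_cast hzero a a (G.loopless.irrefl a)
  have hkk : c k k = 0 := by
    simp only [hc]
    exact_mod_cast hzero b b (G.loopless.irrefl b)
  -- the full reindexed sum
  have hrow : ∀ x : Fin n, ∑ v, c x v = ((wdeg w (f.symm x) : ℕ) : ℂ) := by
    intro x
    rw [wdeg, Nat.cast_sum]
    exact Fintype.sum_equiv f.symm _ _ fun v => rfl
  have hreidx : ∑ p : Fin n × Fin n, (w p.1 p.2 : ℂ) * Jw j k (f p.1) (f p.2)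
      = ∑ u, ∑ v, c u v * Jw j k u v := by
    have hsplit : ∑ p : Fin n × Fin n, c p.1 p.2 * Jw j k p.1 p.2
        = ∑ u, ∑ v, c u v * Jw j k u v :=
      Fintype.sum_prod_type (f := fun p : Fin n × Fin n => c p.1 p.2 * Jw j k p.1 p.2)
    rw [← hsplit]
    apply Fintype.sum_equiv (Equiv.prodCongr f f)
    intro p
    simp [hc]
  have hdouble : 2 * ∑ p ∈ pairs n, (w p.1 p.2 : ℂ) * Jw j k (f p.1) (f p.2)
      = ∑ p : Fin n × Fin n, (w p.1 p.2 : ℂ) * Jw j k (f p.1) (f p.2) := by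
    apply pairs_double
    · intro p
      simp only [Prod.fst_swap, Prod.snd_swap]
      rw [Jw_symm]
      norm_cast
      rw [hsymm p.2 p.1]
    · intro x
      rw [Jw_diag j k (f x) hne, mul_zero]
  have main : ∑ p ∈ pairs n, (w p.1 p.2 : ℂ) * Jw j k (f p.1) (f p.2)
      = ((wdeg w a : ℕ) : ℂ) - ((wdeg w b : ℕ) : ℂ) + Complex.I * (w a b : ℂ) := by
    have h2 : (2 : ℂ) ≠ 0 := two_ne_zero
    apply mul_left_cancel₀ h2
    rw [hdouble, hreidx, bigSum hne c hcs hjj hkk, hrow j, hrow k]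
    have : c j k = (w a b : ℂ) := rfl
    rw [this]
    ring
  -- extract real part
  rw [main]
  rw [main] at hre
  simp only [Complex.add_re, Complex.sub_re, Complex.natCast_re, Complex.mul_re,
    Complex.I_re, Complex.I_im, Complex.natCast_im, zero_mul, one_mul, mul_zero,
    zero_sub, sub_zero, neg_zero, add_zero] at hre
  have hdeq : wdeg w a = wdeg w b := by
    have := sub_eq_zero.mp hre
    exact_mod_cast this
  have hwab : w a b = 0 := by
    by_contra hw
    have hadj : G.Adj a b := by
      by_contra hadj
      exact hw (hzero a b hadj)
    exact hli a b hadj hdeq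
  rw [hdeq, hwab]
  simp
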